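/- Let W be a nonempty separable topological space and let ι be a type whose cardinality κ satisfies ℵ₀ ≤ κ ≤ 𝔠. Then there exists a homeomorphism φ of the product space W^ι = (ι → W) (product topology) which has a fixed point, whose set of periodic points is dense in W^ι, and such that (W^ι, φ) is totally transitive. -/
import Mathlib

open Topology


open Topology Set Function

namespace Stmt15Aux

variable {Z : Type} [TopologicalSpace Z]

def shift (Z : Type) [TopologicalSpace Z] : (ℤ → Z) ≃ₜ (ℤ → Z) where
  toFun f := fun n => f (n + 1)
  invFun f := fun n => f (n - 1)
  left_inv f := funext fun n => by simp
  right_inv f := funext fun n => by simp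
  continuous_toFun := continuous_pi fun n => continuous_apply (n + 1)
  continuous_invFun := continuous_pi fun n => continuous_apply (n - 1)

lemma shift_iterate (m : ℕ) (f : ℤ → Z) (x : ℤ) : (⇑(shift Z))^[m] f x = f (x + m) := by
  induction m generalizing f x with
  | zero => simp
  | succ m ih =>
      rw [Function.iterate_succ_apply, ih]
      show f (x + m + 1) = _
      push_cast; ring_nf

lemma iter_conj {α β : Type*} (e : α ≃ β) (g : β → β) (φ : α → α)
    (hφ : ∀ x, φ x = e.symm (g (e x))) : ∀ n x, φ^[n] x = e.symm (g^[n] (e x)) := by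
  intro n
  induction n with
  | zero => simp
  | succ n ih =>
      intro x
      rw [Function.iterate_succ_apply, hφ, ih, e.apply_symm_apply,
        ← Function.iterate_succ_apply]

lemma dense_preimage {α β : Type*} [TopologicalSpace α] [TopologicalSpace β]
    (e : α ≃ₜ β) {s : Set β} (hs : Dense s) : Dense (e ⁻¹' s) := by
  rw [dense_iff_closure_eq] at hs ⊢
  rw [← e.preimage_closure, hs, Set.preimage_univ]

lemma dense_image {α β : Type*} [TopologicalSpace α] [TopologicalSpace β]
    (e : α ≃ₜ β) {s : Set α} (hs : Dense s) : Dense (e '' s) := by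
  rw [dense_iff_closure_eq] at hs ⊢
  rw [← e.image_closure, hs, Set.image_univ, Homeomorph.range_coe]

lemma dense_periodic (Z : Type) [TopologicalSpace Z] :
    Dense {f : ℤ → Z | ∃ m : ℕ, 0 < m ∧ (⇑(shift Z))^[m] f = f} := by
  rw [dense_iff_inter_open]
  intro U hU ⟨f, hf⟩
  obtain ⟨I, u, hIu, hsub⟩ := isOpen_pi_iff.mp hU f hf
  set L : ℕ := I.sup Int.natAbs with hL
  have hle : ∀ i ∈ I, i.natAbs ≤ L := fun i hi => Finset.le_sup hi
  set M : ℕ := 2 * L + 1 with hM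
  refine ⟨fun x => f ((x + L) % (M : ℤ) - L), hsub fun i hi => ?_, ⟨M, by omega, ?_⟩⟩
  · have h1 : i.natAbs ≤ L := hle i hi
    have : (i + (L : ℤ)) % (M : ℤ) = i + L := Int.emod_eq_of_lt (by omega) (by push_cast; omega)
    simp only [this]
    simpa using (hIu i hi).2
  · funext x
    rw [shift_iterate]
    have : (x + (M : ℤ) + L) % (M : ℤ) = (x + L) % M := by
      rw [show x + (M : ℤ) + L = x + L + (M : ℤ) * 1 by ring, Int.add_mul_emod_self_left]
    simp [this]


variable {Z : Type} [TopologicalSpace Z]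

abbrev Pat : Type := Σ L : ℕ, (Fin (2 * L + 1) → ℕ)

noncomputable def C (p : Pat) (o : ℤ) : ℕ :=
  if h : 0 ≤ o ∧ o < 2 * (p.1 : ℤ) + 1 then p.2 ⟨o.toNat, by omega⟩ else 0

variable (F : ℕ → ℕ × Pat)

def mf : ℕ → ℕ
  | 0 => ((F 0).1 + 1) * ((F 0).2.1 + 1)
  | t + 1 => ((F (t + 1)).1 + 1) * (mf t + (F t).2.1 + (F (t + 1)).2.1 + 1)

lemma mf_mul (t : ℕ) : ∃ q : ℕ, 1 ≤ q ∧ mf F t = ((F t).1 + 1) * q := by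
  cases t with
  | zero => exact ⟨(F 0).2.1 + 1, by omega, rfl⟩
  | succ t => exact ⟨mf F t + (F t).2.1 + (F (t + 1)).2.1 + 1, by omega, rfl⟩

lemma mf_step (t : ℕ) : mf F t + (F t).2.1 + (F (t + 1)).2.1 < mf F (t + 1) := by
  have : mf F (t + 1) = ((F (t + 1)).1 + 1) * (mf F t + (F t).2.1 + (F (t + 1)).2.1 + 1) := rfl
  nlinarith [Nat.zero_le ((F (t+1)).1)]

lemma mf_sep {s t : ℕ} (h : s < t) :
    (mf F s : ℤ) + (F s).2.1 < (mf F t : ℤ) - (F t).2.1 := by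
  induction t, h using Nat.le_induction with
  | base => have := mf_step F s; simp only [Nat.succ_eq_add_one]; push_cast; omega
  | succ t hst ih => have := mf_step F t; push_cast at ih ⊢; omega

open scoped Classical in
noncomputable def wf (d : ℕ → Z) : ℤ → Z := fun x =>
  if h : ∃ t, (mf F t : ℤ) - (F t).2.1 ≤ x ∧ x ≤ (mf F t : ℤ) + (F t).2.1 then
    d (C (F h.choose).2 (x - ((mf F h.choose : ℤ) - (F h.choose).2.1)))
  else d 0

lemma wf_eq (d : ℕ → Z) {t : ℕ} {x : ℤ} (h1 : (mf F t : ℤ) - (F t).2.1 ≤ x)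
    (h2 : x ≤ (mf F t : ℤ) + (F t).2.1) :
    wf F d x = d (C (F t).2 (x - ((mf F t : ℤ) - (F t).2.1))) := by
  have h : ∃ t, (mf F t : ℤ) - (F t).2.1 ≤ x ∧ x ≤ (mf F t : ℤ) + (F t).2.1 := ⟨t, h1, h2⟩
  have hs := h.choose_spec
  have : h.choose = t := by
    rcases lt_trichotomy h.choose t with hlt | he | hgt
    · exact absurd (mf_sep F hlt) (by omega)
    · exact he
    · exact absurd (mf_sep F hgt) (by omega)
  classical
  rw [wf, dif_pos h, this]



set_option maxHeartbeats 1000000 in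
lemma dense_orbit (Z : Type) [TopologicalSpace Z] (d : ℕ → Z) (hd : DenseRange d) :
    ∃ w : ℤ → Z, ∀ k : ℕ, 0 < k →
      Dense (Set.range fun n : ℕ => (⇑(shift Z))^[k * (n + 1)] w) := by
  classical
  obtain ⟨F, hF⟩ := exists_surjective_nat (ℕ × Pat)
  refine ⟨wf F d, fun k hk => ?_⟩
  rw [dense_iff_inter_open]
  intro U hU ⟨f, hf⟩
  obtain ⟨I, u, hIu, hsub⟩ := isOpen_pi_iff.mp hU f hf
  set L : ℕ := I.sup Int.natAbs with hL
  have hle : ∀ i ∈ I, i.natAbs ≤ L := fun i hi => Finset.le_sup hi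
  set c₀ : Fin (2 * L + 1) → ℕ := fun j =>
    if hi : ((j : ℤ) - L) ∈ I then
      (hd.exists_mem_open (hIu _ hi).1 ⟨f _, (hIu _ hi).2⟩).choose
    else 0 with hc₀
  have key : ∀ (jn : ℕ) (h : jn < 2 * L + 1) (i' : ℤ), (jn : ℤ) - L = i' → i' ∈ I →
      d (c₀ ⟨jn, h⟩) ∈ u i' := by
    intro jn h i' he hi'
    subst he
    show d (c₀ ⟨jn, h⟩) ∈ _
    rw [hc₀]
    simp only
    rw [dif_pos hi']
    exact (hd.exists_mem_open (hIu _ hi').1 ⟨f _, (hIu _ hi').2⟩).choose_spec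
  obtain ⟨t, ht⟩ := hF (k - 1, ⟨L, c₀⟩)
  have hK : (F t).1 + 1 = k := by rw [ht]; omega
  have hP : (F t).2 = ⟨L, c₀⟩ := by rw [ht]
  have hPL : (F t).2.1 = L := by rw [hP]
  obtain ⟨q, hq1, hq2⟩ := mf_mul F t
  have hmt : k * (q - 1 + 1) = mf F t := by rw [← hK, hq2]; congr 1; omega
  refine ⟨(⇑(shift Z))^[k * (q - 1 + 1)] (wf F d), hsub fun i hi => ?_, ⟨q - 1, rfl⟩⟩
  have hiL : i.natAbs ≤ L := hle i hi
  rw [shift_iterate, hmt]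
  have hb1 : (mf F t : ℤ) - (F t).2.1 ≤ i + mf F t := by rw [hPL]; omega
  have hb2 : i + (mf F t : ℤ) ≤ (mf F t : ℤ) + (F t).2.1 := by rw [hPL]; omega
  rw [wf_eq F d hb1 hb2, hP]
  have ho : i + (mf F t : ℤ) - ((mf F t : ℤ) - ((⟨L, c₀⟩ : Pat)).1) = i + L := by
    show i + (mf F t : ℤ) - ((mf F t : ℤ) - (L : ℤ)) = i + L
    ring
  rw [ho]
  have hcond : 0 ≤ i + (L : ℤ) ∧ i + (L : ℤ) < 2 * ((⟨L, c₀⟩ : Pat)).1 + 1 := by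
    show 0 ≤ i + (L : ℤ) ∧ i + (L : ℤ) < 2 * (L : ℤ) + 1
    omega
  have hC : C (⟨L, c₀⟩ : Pat) (i + L) =
      c₀ ⟨(i + (L : ℤ)).toNat, by omega⟩ := by
    rw [C, dif_pos hcond]
  rw [hC]
  exact key (i + (L : ℤ)).toNat (by omega) i (by omega) hi
lemma exists_denseRange (W : Type) [TopologicalSpace W] [Nonempty W]
    [TopologicalSpace.SeparableSpace W] (ι : Type) (hι2 : Cardinal.mk ι ≤ Cardinal.continuum) :
    ∃ d : ℕ → (ι → W), DenseRange d := by
  classical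
  have hcb : Cardinal.mk (ℕ → Bool) = Cardinal.continuum := by
    rw [← Cardinal.power_def, Cardinal.mk_bool, Cardinal.mk_nat, Cardinal.two_power_aleph0]
  rw [← hcb, Cardinal.le_def] at hι2
  obtain ⟨j⟩ := hι2
  obtain ⟨dW, hdW⟩ : ∃ dW : ℕ → W, DenseRange dW :=
    ⟨TopologicalSpace.denseSeq W, TopologicalSpace.denseRange_denseSeq W⟩
  obtain ⟨G, hG⟩ := exists_surjective_nat (Σ n : ℕ, ((Fin n → Bool) → ℕ))
  refine ⟨fun n => fun i => dW ((G n).2 (fun a : Fin (G n).1 => j i a)), ?_⟩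
  rw [DenseRange, dense_iff_inter_open]
  intro U hU ⟨f, hf⟩
  obtain ⟨I, u, hIu, hsub⟩ := isOpen_pi_iff.mp hU f hf
  -- find separating length N
  have hsep : ∀ i ∈ I, ∀ i' ∈ I, i ≠ i' → ∃ a : ℕ, j i a ≠ j i' a := by
    intro i _ i' _ hne
    by_contra h
    push_neg at h
    exact hne (j.injective (funext h))
  set N : ℕ := (I ×ˢ I).sup (fun p =>
    if h : p.1 ∈ I ∧ p.2 ∈ I ∧ p.1 ≠ p.2 then
      (hsep p.1 h.1 p.2 h.2.1 h.2.2).choose + 1 else 0) with hN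
  have hsepN : ∀ i ∈ I, ∀ i' ∈ I, i ≠ i' →
      (fun a : Fin N => j i a) ≠ (fun a : Fin N => j i' a) := by
    intro i hi i' hi' hne
    have hcond : (i, i').1 ∈ I ∧ (i, i').2 ∈ I ∧ (i, i').1 ≠ (i, i').2 := ⟨hi, hi', hne⟩
    have hmem : (i, i') ∈ I ×ˢ I := Finset.mem_product.mpr ⟨hi, hi'⟩
    have hlt : (hsep i hi i' hi' hne).choose + 1 ≤ N := by
      have h1 := Finset.le_sup (f := fun p =>
        if h : p.1 ∈ I ∧ p.2 ∈ I ∧ p.1 ≠ p.2 then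
          (hsep p.1 h.1 p.2 h.2.1 h.2.2).choose + 1 else 0) hmem
      have h2 : (if h : i ∈ I ∧ i' ∈ I ∧ i ≠ i' then
          (hsep i h.1 i' h.2.1 h.2.2).choose + 1 else 0) ≤ N := h1
      rwa [dif_pos (show i ∈ I ∧ i' ∈ I ∧ i ≠ i' from ⟨hi, hi', hne⟩)] at h2
    intro hfun
    have := congrFun hfun ⟨(hsep i hi i' hi' hne).choose, by omega⟩
    exact (hsep i hi i' hi' hne).choose_spec this
  -- build the pattern
  set g : (Fin N → Bool) → ℕ := fun v =>
    if h : ∃ i, i ∈ I ∧ (fun a : Fin N => j i a) = v then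
      (hdW.exists_mem_open (hIu _ h.choose_spec.1).1 ⟨f _, (hIu _ h.choose_spec.1).2⟩).choose
    else 0 with hg
  obtain ⟨n, hn⟩ := hG ⟨N, g⟩
  refine ⟨_, hsub fun i hi => ?_, Set.mem_range_self n⟩
  show dW ((G n).2 (fun a : Fin (G n).1 => j i a)) ∈ u i
  rw [hn]
  show dW (g (fun a : Fin N => j i a)) ∈ u i
  have hex : ∃ i', i' ∈ I ∧ (fun a : Fin N => j i' a) = (fun a : Fin N => j i a) :=
    ⟨i, hi, rfl⟩
  have heq : hex.choose = i := by
    by_contra hne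
    exact hsepN _ hex.choose_spec.1 i hi hne hex.choose_spec.2
  rw [hg]
  simp only
  rw [dif_pos hex]
  have := (hdW.exists_mem_open (hIu _ hex.choose_spec.1).1
    ⟨f _, (hIu _ hex.choose_spec.1).2⟩).choose_spec
  have hu : u i = u hex.choose := by rw [heq]
  rw [hu]
  exact this

def psi (W ι : Type) [TopologicalSpace W] (e : ℤ × ι ≃ ι) : (ι → W) ≃ₜ (ℤ → ι → W) where
  toFun g := fun n i => g (e (n, i))
  invFun h := fun x => h (e.symm x).1 (e.symm x).2
  left_inv g := funext fun x => by simp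
  right_inv h := funext fun n => funext fun i => by simp
  continuous_toFun := continuous_pi fun n => continuous_pi fun i => continuous_apply _
  continuous_invFun := continuous_pi fun x =>
    (continuous_apply (e.symm x).2).comp (continuous_apply (e.symm x).1)

end Stmt15Aux

open Stmt15Aux in
/-- For a nonempty separable space `W` and a type `ι` with `ℵ₀ ≤ card ι ≤ 𝔠`, the power
`W^ι` admits a totally transitive homeomorphism with a fixed point and a dense set of
periodic points. -/
theorem stmt15 (W : Type) [TopologicalSpace W] [Nonempty W]
    [TopologicalSpace.SeparableSpace W] (ι : Type)
    (hι1 : Cardinal.aleph0 ≤ Cardinal.mk ι) (hι2 : Cardinal.mk ι ≤ Cardinal.continuum) :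
    ∃ φ : (ι → W) ≃ₜ (ι → W), (∃ x, φ x = x) ∧
      Dense {x : ι → W | ∃ m : ℕ, 0 < m ∧ (⇑φ)^[m] x = x} ∧
      ∃ w : ι → W, ∀ k : ℕ, 0 < k →
        Dense (Set.range fun n : ℕ => (⇑φ)^[k * (n + 1)] w) := by
  classical
  have hcard : Cardinal.mk (ℤ × ι) = Cardinal.mk ι := by
    rw [Cardinal.mk_prod, Cardinal.lift_id, Cardinal.lift_id, Cardinal.mk_int]
    exact Cardinal.mul_eq_right hι1 hι1 Cardinal.aleph0_ne_zero
  obtain ⟨e⟩ := Cardinal.eq.mp hcard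
  set Ψ : (ι → W) ≃ₜ (ℤ → ι → W) := psi W ι e with hΨ
  set σ : (ℤ → ι → W) ≃ₜ (ℤ → ι → W) := shift (ι → W) with hσ
  set φ : (ι → W) ≃ₜ (ι → W) := Ψ.trans (σ.trans Ψ.symm) with hφdef
  have hφ : ∀ x, φ x = Ψ.symm (σ (Ψ x)) := fun _ => rfl
  have hiter : ∀ n x, (⇑φ)^[n] x = Ψ.symm ((⇑σ)^[n] (Ψ x)) :=
    iter_conj Ψ.toEquiv (⇑σ) (⇑φ) hφ
  refine ⟨φ, ?_, ?_, ?_⟩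
  · -- fixed point
    set c : ℤ → ι → W := fun _ _ => Classical.arbitrary W with hc
    refine ⟨Ψ.symm c, ?_⟩
    rw [hφ, Ψ.apply_symm_apply]
    have : σ c = c := funext fun n => rfl
    rw [this]
  · -- dense periodic points
    have hPer := dense_periodic (ι → W)
    have hpre := dense_preimage Ψ hPer
    refine hpre.mono fun x hx => ?_
    obtain ⟨m, hm, hmx⟩ := hx
    exact ⟨m, hm, by rw [hiter, hmx, Ψ.symm_apply_apply]⟩
  · -- totally transitive
    obtain ⟨d, hd⟩ := exists_denseRange W ι hι2
    obtain ⟨w', hw'⟩ := dense_orbit (ι → W) d hd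
    refine ⟨Ψ.symm w', fun k hk => ?_⟩
    have heq : (fun n : ℕ => (⇑φ)^[k * (n + 1)] (Ψ.symm w'))
        = ⇑Ψ.symm ∘ (fun n : ℕ => (⇑σ)^[k * (n + 1)] w') := by
      funext n
      show (⇑φ)^[k * (n + 1)] (Ψ.symm w') = Ψ.symm ((⇑σ)^[k * (n + 1)] w')
      rw [hiter, Ψ.apply_symm_apply]
    rw [heq, Set.range_comp]
    exact dense_image Ψ.symm (hw' k hk)
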